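/- With the same setup, define A(g)_β to be the set of u ∈ dom s such that s - g has a supporting hyperplane at u with normal vector [β,-1]. Then 𝓔(g)_β = ⋃_{u ∈ A(g)_β} 𝓔^u. -/

import Mathlib

open scoped RealInnerProductSpace

/-- The microcanonical entropy `s(u) = -inf{I(x) : H̃(x) = u}`. -/
noncomputable def microEntropy {σ : ℕ} {X : Type*} (I : X → EReal)
    (H : X → EuclideanSpace ℝ (Fin σ)) (u : EuclideanSpace ℝ (Fin σ)) : EReal :=
  -sInf (I '' {x | H x = u})

/-- The set `𝓔^u` of microcanonical equilibrium macrostates: minimizers of `I`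
subject to `H̃(x) = u`. -/
def microEquilibrium {σ : ℕ} {X : Type*} (I : X → EReal)
    (H : X → EuclideanSpace ℝ (Fin σ)) (u : EuclideanSpace ℝ (Fin σ)) : Set X :=
  {x | H x = u ∧ ∀ y, H y = u → I x ≤ I y}

/-- The set `𝓔(g)_β` of generalized canonical equilibrium macrostates: minimizers
of `I(x) + ⟨β, H̃(x)⟩ + g(H̃(x))`. -/
def genCanonEquilibrium {σ : ℕ} {X : Type*} (I : X → EReal)
    (H : X → EuclideanSpace ℝ (Fin σ)) (g : EuclideanSpace ℝ (Fin σ) → ℝ)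
    (β : EuclideanSpace ℝ (Fin σ)) : Set X :=
  {x | ∀ y, I x + ((⟪β, H x⟫ + g (H x) : ℝ) : EReal) ≤
    I y + ((⟪β, H y⟫ + g (H y) : ℝ) : EReal)}


/-- with `A(g)_β` the set of `u ∈ dom s` at which `s - g` has a
supporting hyperplane with normal vector `[β, -1]`, one has
`𝓔(g)_β = ⋃_{u ∈ A(g)_β} 𝓔^u`. -/
theorem genCanon_union_over_support_points
    (σ : ℕ) (X : Type*) [MetricSpace X]
    (I : X → EReal) (hIpos : ∀ x, 0 ≤ I x) (hIlsc : LowerSemicontinuous I)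
    (hIcpt : ∀ c : ℝ, IsCompact {x | I x ≤ ((c : ℝ) : EReal)})
    (hI0 : ∃ x, I x = 0)
    (H : X → EuclideanSpace ℝ (Fin σ)) (hH : Continuous H)
    (hHb : ∃ C : ℝ, ∀ x, ‖H x‖ ≤ C)
    (g : EuclideanSpace ℝ (Fin σ) → ℝ) (hg : Continuous g)
    (β : EuclideanSpace ℝ (Fin σ)) :
    genCanonEquilibrium I H g β =
      ⋃ u ∈ {u : EuclideanSpace ℝ (Fin σ) | microEntropy I H u ≠ ⊥ ∧
        ∀ v, microEntropy I H v - ((g v : ℝ) : EReal) ≤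
          microEntropy I H u - ((g u : ℝ) : EReal) + ((⟪β, v - u⟫ : ℝ) : EReal)},
        microEquilibrium I H u := by
  ext x₀
  simp only [Set.mem_iUnion, Set.mem_setOf_eq, exists_prop]
  constructor
  · intro hx₀
    set u := H x₀ with hu
    obtain ⟨x₁, hx₁⟩ := hI0
    have hbot : I x₀ ≠ ⊥ := fun h => by simpa [h] using hIpos x₀
    have hfin : I x₀ ≠ ⊤ := by
      intro htop
      have h := hx₀ x₁
      rw [htop, hx₁, EReal.top_add_coe, zero_add] at h
      exact EReal.coe_ne_top _ (top_le_iff.mp h)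
    set r₀ : ℝ := (I x₀).toReal with hr₀def
    have hr₀ : I x₀ = (r₀ : EReal) := (EReal.coe_toReal hfin hbot).symm
    have hmin : ∀ y, H y = u → I x₀ ≤ I y := by
      intro y hy
      have h := hx₀ y
      rw [hy, ← hu] at h
      exact (EReal.addLECancellable_coe _).add_le_add_iff_right.mp h
    have hsinf : sInf (I '' {x | H x = u}) = (r₀ : EReal) := by
      refine le_antisymm (sInf_le ⟨x₀, rfl, hr₀⟩) (le_sInf ?_)
      rintro w ⟨z, hz, rfl⟩
      exact hr₀ ▸ hmin z hz
    have hEu : microEntropy I H u = ((-r₀ : ℝ) : EReal) := by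
      rw [microEntropy, hsinf, ← EReal.coe_neg]
    refine ⟨u, ⟨by rw [hEu]; exact EReal.coe_ne_bot _, ?_⟩, rfl, hmin⟩
    intro v
    have hA : ((r₀ + (⟪β, u⟫ + g u) - (⟪β, v⟫ + g v) : ℝ) : EReal) ≤
        sInf (I '' {x | H x = v}) := by
      refine le_sInf ?_
      rintro w ⟨z, hz, rfl⟩
      rcases eq_or_ne (I z) ⊤ with hz' | hz'
      · rw [hz']; exact le_top
      have hzb : I z ≠ ⊥ := fun h => by simpa [h] using hIpos z
      set r : ℝ := (I z).toReal with hrdef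
      have hr : I z = (r : EReal) := (EReal.coe_toReal hz' hzb).symm
      have h := hx₀ z
      rw [hr₀, hr, hz, ← hu] at h
      rw [hr]
      have h' : r₀ + (⟪β, u⟫ + g u) ≤ r + (⟪β, v⟫ + g v) := by exact_mod_cast h
      exact_mod_cast by linarith
    have h1 : microEntropy I H v ≤
        ((-(r₀ + (⟪β, u⟫ + g u) - (⟪β, v⟫ + g v)) : ℝ) : EReal) := by
      rw [microEntropy, show ((-(r₀ + (⟪β, u⟫ + g u) - (⟪β, v⟫ + g v)) : ℝ) : EReal) =
        -((r₀ + (⟪β, u⟫ + g u) - (⟪β, v⟫ + g v) : ℝ) : EReal) by push_cast; ring_nf]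
      exact EReal.neg_le_neg_iff.mpr hA
    calc microEntropy I H v - ((g v : ℝ) : EReal)
        ≤ ((-(r₀ + (⟪β, u⟫ + g u) - (⟪β, v⟫ + g v)) : ℝ) : EReal) - ((g v : ℝ) : EReal) := by
          exact add_le_add_left h1 _
      _ = ((-(r₀ + (⟪β, u⟫ + g u) - (⟪β, v⟫ + g v)) - g v : ℝ) : EReal) := by norm_cast
      _ ≤ ((-r₀ - g u + ⟪β, v - u⟫ : ℝ) : EReal) := by
          rw [EReal.coe_le_coe_iff, inner_sub_right]
          linarith
      _ = microEntropy I H u - ((g u : ℝ) : EReal) + ((⟪β, v - u⟫ : ℝ) : EReal) := by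
          rw [hEu]; norm_cast
  · rintro ⟨u, ⟨hne, hsupp⟩, hHx, hmin⟩
    have hsinf : sInf (I '' {x | H x = u}) = I x₀ := by
      refine le_antisymm (sInf_le ⟨x₀, hHx, rfl⟩) (le_sInf ?_)
      rintro w ⟨z, hz, rfl⟩
      exact hmin z hz
    have hfin : I x₀ ≠ ⊤ := by
      intro h
      exact hne (by rw [microEntropy, hsinf, h]; rfl)
    have hbot : I x₀ ≠ ⊥ := fun h => by simpa [h] using hIpos x₀
    set r₀ : ℝ := (I x₀).toReal with hr₀def
    have hr₀ : I x₀ = (r₀ : EReal) := (EReal.coe_toReal hfin hbot).symm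
    have hEu : microEntropy I H u = ((-r₀ : ℝ) : EReal) := by
      rw [microEntropy, hsinf, hr₀, ← EReal.coe_neg]
    intro y
    rcases eq_or_ne (I y) ⊤ with hy' | hy'
    · rw [hy', EReal.top_add_coe]; exact le_top
    have hyb : I y ≠ ⊥ := fun h => by simpa [h] using hIpos y
    set r : ℝ := (I y).toReal with hrdef
    have hr : I y = (r : EReal) := (EReal.coe_toReal hy' hyb).symm
    have hlow : ((-r : ℝ) : EReal) ≤ microEntropy I H (H y) := by
      rw [microEntropy, EReal.coe_neg]
      exact EReal.neg_le_neg_iff.mpr (sInf_le ⟨y, rfl, hr⟩)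
    have hchain : ((-r - g (H y) : ℝ) : EReal) ≤ ((-r₀ - g u + ⟪β, H y - u⟫ : ℝ) : EReal) := by
      calc ((-r - g (H y) : ℝ) : EReal) = ((-r : ℝ) : EReal) - ((g (H y) : ℝ) : EReal) := by norm_cast
        _ ≤ microEntropy I H (H y) - ((g (H y) : ℝ) : EReal) := by simpa [sub_eq_add_neg] using add_le_add_left hlow (-((g (H y) : ℝ) : EReal))
        _ ≤ microEntropy I H u - ((g u : ℝ) : EReal) + ((⟪β, H y - u⟫ : ℝ) : EReal) := hsupp (H y)
        _ = ((-r₀ - g u + ⟪β, H y - u⟫ : ℝ) : EReal) := by rw [hEu]; norm_cast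
    have hreal : -r - g (H y) ≤ -r₀ - g u + (⟪β, H y⟫ - ⟪β, u⟫) := by
      rw [← inner_sub_right]
      exact_mod_cast hchain
    rw [hr₀, hr, hHx]
    have : r₀ + (⟪β, u⟫ + g u) ≤ r + (⟪β, H y⟫ + g (H y)) := by linarith
    exact_mod_cast this
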